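/- For m ≥ e, the number of w = (w_1,…,w_{m+1}) ∈ F_q^{m+1} such that F_w(x) = w_1 + w_2 x + w_3 x^p + ⋯ + w_{m+1} x^{p^{m-1}} has no root in F_q equals q^{m−e} · ∑_{i=1}^{e} (p^e − p^{e−i}) · (∏_{j=0}^{e−i−1} (p^e − p^j)^2) / (∏_{j=0}^{e−i−1} (p^{e−i} − p^j)). -/

import Mathlib

open Function LinearMap Module Finset

section General

variable {F : Type*} [Field F] [Fintype F]
variable {V : Type*} [AddCommGroup V] [Module F V] [FiniteDimensional F V]
variable {W : Type*} [AddCommGroup W] [Module F W] [FiniteDimensional F W]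

lemma aux_injective_iff_comp_basis {ι : Type*} [Fintype ι] (b : Basis ι F V) (f : V →ₗ[F] W) :
    Injective f ↔ LinearIndependent F (f ∘ b) := by
  constructor
  · intro hf
    exact b.linearIndependent.map' f (ker_eq_bot.mpr hf)
  · intro h
    rw [← ker_eq_bot, eq_bot_iff]
    intro x hx
    have hrep := b.sum_repr x
    have h0 : ∑ i, b.repr x i • (f ∘ b) i = 0 := by
      have := congrArg f hrep
      simp only [map_sum, map_smul] at this
      simpa [Function.comp, this] using hx
    have := (Fintype.linearIndependent_iff.mp h) _ h0
    have : ∀ i, b.repr x i = 0 := this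
    rw [Submodule.mem_bot, ← hrep]
    simp [this]

lemma card_inj_linearMap (h : finrank F V ≤ finrank F W) :
    Nat.card {f : V →ₗ[F] W // Injective f}
      = ∏ i ∈ Finset.range (finrank F V),
          (Fintype.card F ^ finrank F W - Fintype.card F ^ i) := by
  haveI : Finite W := Module.finite_of_finite F
  classical
  let b := Module.finBasis F V
  have e1 : {f : V →ₗ[F] W // Injective f}
      ≃ {s : Fin (finrank F V) → W // LinearIndependent F s} :=
  { toFun := fun f => ⟨f.1 ∘ b, (aux_injective_iff_comp_basis b f.1).mp f.2⟩
    invFun := fun s => ⟨b.constr F s.1, by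
      rw [aux_injective_iff_comp_basis b]
      have : (b.constr F s.1) ∘ b = s.1 := funext fun i => b.constr_basis F s.1 i
      rw [this]; exact s.2⟩
    left_inv := fun f => Subtype.ext (b.ext fun i => b.constr_basis F _ i)
    right_inv := fun s => Subtype.ext (funext fun i => b.constr_basis F s.1 i) }
  rw [Nat.card_congr e1, card_linearIndependent h, ← Fin.prod_univ_eq_prod_range]

noncomputable def dualHomEquiv :
    {f : V →ₗ[F] W // Surjective f} ≃ {g : Dual F W →ₗ[F] Dual F V // Injective g} where
  toFun f := ⟨f.1.dualMap, dualMap_injective_iff.mpr f.2⟩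
  invFun g := ⟨(evalEquiv F W).symm.toLinearMap ∘ₗ g.1.dualMap ∘ₗ (evalEquiv F V).toLinearMap, by
    show Surjective ((evalEquiv F W).symm ∘ g.1.dualMap ∘ (evalEquiv F V))
    exact (evalEquiv F W).symm.surjective.comp
      ((dualMap_surjective_of_injective g.2).comp (evalEquiv F V).surjective)⟩
  left_inv f := by
    apply Subtype.ext
    apply LinearMap.ext
    intro v
    apply (evalEquiv F W).injective
    simp only [LinearMap.comp_apply, LinearEquiv.coe_coe, LinearEquiv.apply_symm_apply]
    apply LinearMap.ext
    intro φ
    rfl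
  right_inv g := by
    apply Subtype.ext
    apply LinearMap.ext
    intro φ
    apply LinearMap.ext
    intro v
    simp only [dualMap_apply, LinearMap.comp_apply, LinearEquiv.coe_coe,
      apply_evalEquiv_symm_apply]
    rfl

lemma card_surj_linearMap (h : finrank F W ≤ finrank F V) :
    Nat.card {f : V →ₗ[F] W // Surjective f}
      = ∏ i ∈ Finset.range (finrank F W),
          (Fintype.card F ^ finrank F V - Fintype.card F ^ i) := by
  rw [Nat.card_congr (dualHomEquiv (F := F) (V := V) (W := W)),
    card_inj_linearMap (by rw [Subspace.dual_finrank_eq, Subspace.dual_finrank_eq]; exact h),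
    Subspace.dual_finrank_eq, Subspace.dual_finrank_eq]

end General

section Rank

variable {F : Type*} [Field F] [Fintype F]
variable {V : Type*} [AddCommGroup V] [Module F V] [FiniteDimensional F V]

noncomputable def fiberEquiv (r : ℕ) (L : V →ₗ[F] V) (hL : finrank F (LinearMap.range L) = r) :
    {x : {f : (Fin r → F) →ₗ[F] V // Injective f} × {f : V →ₗ[F] (Fin r → F) // Surjective f} //
        x.1.1 ∘ₗ x.2.1 = L} ≃ ((Fin r → F) ≃ₗ[F] LinearMap.range L) where
  toFun x :=
    have hrange : LinearMap.range x.1.1.1 = LinearMap.range L := by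
      have h := congrArg LinearMap.range x.2
      rwa [LinearMap.range_comp, range_eq_top.mpr x.1.2.2, Submodule.map_top] at h
    have hinj : Injective (x.1.1.1.codRestrict (LinearMap.range L)
        (fun v => hrange.le (LinearMap.mem_range_self _ v))) :=
      fun a b hab => x.1.1.2 (congrArg Subtype.val hab)
    LinearEquiv.ofBijective _ ⟨hinj,
      (LinearMap.injective_iff_surjective_of_finrank_eq_finrank
        (by rw [Module.finrank_fin_fun, hL])).mp hinj⟩
  invFun φ :=
    ⟨(⟨(LinearMap.range L).subtype ∘ₗ φ.toLinearMap,
        (Submodule.injective_subtype _).comp φ.injective⟩,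
      ⟨φ.symm.toLinearMap ∘ₗ L.rangeRestrict,
        φ.symm.surjective.comp L.surjective_rangeRestrict⟩), by
      ext v
      simp [LinearMap.comp_apply]⟩
  left_inv x := by
    apply Subtype.ext
    apply Prod.ext
    · apply Subtype.ext
      apply LinearMap.ext
      intro v
      rfl
    · apply Subtype.ext
      apply LinearMap.ext
      intro v
      dsimp only
      rw [LinearMap.comp_apply]
      refine (LinearEquiv.symm_apply_eq _).mpr ?_
      apply Subtype.ext
      exact (LinearMap.congr_fun x.2 v).symm
  right_inv φ := by
    apply LinearEquiv.toLinearMap_injective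
    apply LinearMap.ext
    intro v
    apply Subtype.ext
    rfl

lemma card_rank_mul (r : ℕ) (hr : r ≤ finrank F V) :
    Nat.card {L : V →ₗ[F] V // finrank F (LinearMap.range L) = r}
      * Nat.card ((Fin r → F) ≃ₗ[F] (Fin r → F))
    = (∏ i ∈ Finset.range r, (Fintype.card F ^ finrank F V - Fintype.card F ^ i)) ^ 2 := by
  classical
  haveI : Finite V := Module.finite_of_finite F
  haveI : Finite (V →ₗ[F] V) := Finite.of_injective _ DFunLike.coe_injective
  haveI : Finite ((Fin r → F) →ₗ[F] V) := Finite.of_injective _ DFunLike.coe_injective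
  haveI : Finite (V →ₗ[F] (Fin r → F)) := Finite.of_injective _ DFunLike.coe_injective
  haveI : Fintype (V →ₗ[F] V) := Fintype.ofFinite _
  haveI : Fintype ((Fin r → F) →ₗ[F] V) := Fintype.ofFinite _
  haveI : Fintype (V →ₗ[F] (Fin r → F)) := Fintype.ofFinite _
  set G : ℕ := Nat.card ((Fin r → F) ≃ₗ[F] (Fin r → F)) with hG
  -- fiber cardinalities of θ
  have hfib : ∀ L : V →ₗ[F] V,
      Nat.card {x : {f : (Fin r → F) →ₗ[F] V // Injective f} ×
          {f : V →ₗ[F] (Fin r → F) // Surjective f} // x.1.1 ∘ₗ x.2.1 = L}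
        = if finrank F (LinearMap.range L) = r then G else 0 := by
    intro L
    by_cases hL : finrank F (LinearMap.range L) = r
    · rw [if_pos hL, Nat.card_congr (fiberEquiv r L hL)]
      have e0 : (LinearMap.range L) ≃ₗ[F] (Fin r → F) :=
        LinearEquiv.ofFinrankEq _ _ (by rw [Module.finrank_fin_fun, hL])
      exact Nat.card_congr
        { toFun := fun φ => φ.trans e0
          invFun := fun ψ => ψ.trans e0.symm
          left_inv := fun φ => by ext v; simp
          right_inv := fun ψ => by ext v; simp }
    · rw [if_neg hL]
      have : IsEmpty {x : {f : (Fin r → F) →ₗ[F] V // Injective f} ×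
          {f : V →ₗ[F] (Fin r → F) // Surjective f} // x.1.1 ∘ₗ x.2.1 = L} := by
        constructor
        rintro ⟨⟨i, s⟩, hx⟩
        apply hL
        rw [← hx, LinearMap.range_comp, range_eq_top.mpr s.2, Submodule.map_top,
          LinearMap.finrank_range_of_inj i.2, Module.finrank_fin_fun]
      exact Nat.card_of_isEmpty
  have key : Nat.card ({f : (Fin r → F) →ₗ[F] V // Injective f} ×
        {f : V →ₗ[F] (Fin r → F) // Surjective f})
      = Nat.card {L : V →ₗ[F] V // finrank F (LinearMap.range L) = r} * G := by
    rw [Nat.card_eq_fintype_card,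
      Fintype.card_congr (Equiv.sigmaFiberEquiv (fun x : {f : (Fin r → F) →ₗ[F] V // Injective f} ×
        {f : V →ₗ[F] (Fin r → F) // Surjective f} => x.1.1 ∘ₗ x.2.1)).symm,
      Fintype.card_sigma]
    have : ∀ L : V →ₗ[F] V, Fintype.card {x : {f : (Fin r → F) →ₗ[F] V // Injective f} ×
          {f : V →ₗ[F] (Fin r → F) // Surjective f} // x.1.1 ∘ₗ x.2.1 = L}
        = if finrank F (LinearMap.range L) = r then G else 0 := by
      intro L; rw [← Nat.card_eq_fintype_card]; exact hfib L
    rw [Finset.sum_congr rfl (fun L _ => this L), Finset.sum_ite, Finset.sum_const,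
      Finset.sum_const_zero, add_zero, smul_eq_mul]
    congr 1
    rw [Nat.card_eq_fintype_card, Fintype.card_subtype]
  rw [← key, Nat.card_prod, card_inj_linearMap (by rwa [Module.finrank_fin_fun]),
    card_surj_linearMap (by rwa [Module.finrank_fin_fun]), Module.finrank_fin_fun, sq]

end Rank

section Galois

open Polynomial

variable (p e : ℕ) [Fact p.Prime]

noncomputable def frobLM (k : ℕ) : GaloisField p e →ₗ[ZMod p] GaloisField p e :=
  AddMonoidHom.toZModLinearMap p (iterateFrobenius (GaloisField p e) p k).toAddMonoidHom

lemma frobLM_apply (k : ℕ) (u : GaloisField p e) : frobLM p e k u = u ^ p ^ k := rfl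

noncomputable def phi (m : ℕ) (t : Fin m → GaloisField p e) :
    GaloisField p e →ₗ[ZMod p] GaloisField p e :=
  ∑ k : Fin m, t k • frobLM p e (k : ℕ)

lemma phi_apply (m : ℕ) (t : Fin m → GaloisField p e) (u : GaloisField p e) :
    phi p e m t u = ∑ k : Fin m, t k * u ^ p ^ (k : ℕ) := by
  simp [phi, frobLM_apply]

lemma pow_mh_injective (he : e ≠ 0) :
    Injective (fun k : Fin e =>
      (powMonoidHom (p ^ (k : ℕ)) : GaloisField p e →* GaloisField p e)) := by
  haveI : Fintype (GaloisField p e) := Fintype.ofFinite _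
  have hcard : Fintype.card (GaloisField p e) = p ^ e := by
    rw [← Nat.card_eq_fintype_card]; exact GaloisField.card p e he
  have hp1 : 1 < p := (Fact.out : p.Prime).one_lt
  intro k l h
  by_contra hne
  have hx : ∀ x : GaloisField p e, x ^ p ^ (k : ℕ) = x ^ p ^ (l : ℕ) := fun x =>
    DFunLike.congr_fun h x
  set f : Polynomial (GaloisField p e) := X ^ p ^ (l : ℕ) - X ^ p ^ (k : ℕ) with hf
  have hfz : f = 0 := by
    apply Polynomial.eq_zero_of_natDegree_lt_card_of_eval_eq_zero f
      (f := (_root_.id : GaloisField p e → GaloisField p e)) injective_id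
    · intro x
      simp [hf, (hx x).symm]
    · calc f.natDegree ≤ max (p ^ (l : ℕ)) (p ^ (k : ℕ)) := by
            refine (Polynomial.natDegree_sub_le _ _).trans ?_
            simp [Polynomial.natDegree_X_pow]
        _ < Fintype.card (GaloisField p e) := by
            rw [hcard]
            exact max_lt (Nat.pow_lt_pow_right hp1 l.2) (Nat.pow_lt_pow_right hp1 k.2)
  have hne' : p ^ (k : ℕ) ≠ p ^ (l : ℕ) := by
    intro hkl
    exact hne (Fin.ext (Nat.pow_right_injective hp1 hkl))
  have : f.coeff (p ^ (l : ℕ)) = 1 := by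
    simp [hf, Polynomial.coeff_X_pow, if_neg (Ne.symm hne'), hne']
  rw [hfz] at this
  simp at this

lemma phi_e_injective (he : e ≠ 0) : Injective (phi p e e) := by
  have li : LinearIndependent (GaloisField p e)
      (fun k : Fin e => ((powMonoidHom (p ^ (k : ℕ)) :
        GaloisField p e →* GaloisField p e) : GaloisField p e → GaloisField p e)) :=
    (linearIndependent_monoidHom (GaloisField p e) (GaloisField p e)).comp _
      (pow_mh_injective p e he)
  intro t t' h
  have h2 : ∀ u, ∑ k : Fin e, (t k - t' k) * u ^ p ^ (k : ℕ) = 0 := by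
    intro u
    have h1 : phi p e e t u = phi p e e t' u := by rw [h]
    rw [phi_apply, phi_apply] at h1
    simp [sub_mul, Finset.sum_sub_distrib, h1]
  have h3 := Fintype.linearIndependent_iff.mp li (fun k => t k - t' k) ?_
  · funext k
    have := h3 k
    exact sub_eq_zero.mp this
  · funext u
    simpa [powMonoidHom] using h2 u

lemma card_End (he : e ≠ 0) :
    Nat.card (GaloisField p e →ₗ[ZMod p] GaloisField p e) = p ^ (e * e) := by
  haveI : Finite (GaloisField p e →ₗ[ZMod p] GaloisField p e) :=
    Finite.of_injective _ DFunLike.coe_injective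
  haveI : Fintype (GaloisField p e →ₗ[ZMod p] GaloisField p e) := Fintype.ofFinite _
  rw [Nat.card_eq_fintype_card, card_eq_pow_finrank (K := ZMod p), ZMod.card,
    Module.finrank_linearMap, GaloisField.finrank p he]

lemma phi_surjective (he : e ≠ 0) {m : ℕ} (hm : e ≤ m) : Surjective (phi p e m) := by
  haveI : Fintype (GaloisField p e) := Fintype.ofFinite _
  haveI : Finite (GaloisField p e →ₗ[ZMod p] GaloisField p e) :=
    Finite.of_injective _ DFunLike.coe_injective
  haveI : Fintype (GaloisField p e →ₗ[ZMod p] GaloisField p e) := Fintype.ofFinite _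
  have hcard : Fintype.card (GaloisField p e) = p ^ e := by
    rw [← Nat.card_eq_fintype_card]; exact GaloisField.card p e he
  have hpsi : Surjective (phi p e e) := by
    have hb : Bijective (phi p e e) :=
      (Fintype.bijective_iff_injective_and_card _).mpr ⟨phi_e_injective p e he, by
        rw [Fintype.card_fun, hcard, Fintype.card_fin, ← Nat.card_eq_fintype_card,
          card_End p e he, ← pow_mul]⟩
    exact hb.2
  intro L
  obtain ⟨c, hc⟩ := hpsi L
  classical
  refine ⟨fun k => if h : (k : ℕ) < e then c ⟨k, h⟩ else 0, ?_⟩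
  rw [← hc]
  show ∑ k : Fin m, _ • frobLM p e (k : ℕ) = ∑ k : Fin e, c k • frobLM p e (k : ℕ)
  rw [← Finset.sum_subset
    (Finset.subset_univ ((Finset.univ : Finset (Fin e)).map (Fin.castLEEmb hm)))]
  · rw [Finset.sum_map]
    apply Finset.sum_congr rfl
    intro j _
    have h1 : ((Fin.castLEEmb hm j : Fin m) : ℕ) = (j : ℕ) := rfl
    rw [h1, dif_pos j.2]
  · intro k _ hk
    have hke : ¬ ((k : ℕ) < e) := by
      intro hlt
      exact hk (Finset.mem_map.mpr ⟨⟨k, hlt⟩, Finset.mem_univ _, by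
        simp [Fin.castLEEmb, Fin.castLE]⟩)
    rw [dif_neg hke, zero_smul]

lemma phi_sub (m : ℕ) (t t' : Fin m → GaloisField p e) :
    phi p e m (t - t') = phi p e m t - phi p e m t' := by
  simp [phi, sub_smul, Finset.sum_sub_distrib]
  rw [← Finset.sum_sub_distrib]
  refine Finset.sum_congr rfl fun k _ => ?_
  ext u
  simp [sub_mul]

end Galois

lemma phi_add (p e : ℕ) [Fact p.Prime] (m : ℕ) (t t' : Fin m → GaloisField p e) :
    phi p e m (t + t') = phi p e m t + phi p e m t' := by
  simp [phi, add_smul, Finset.sum_add_distrib]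

lemma card_avoid (p e : ℕ) [Fact p.Prime] (L : GaloisField p e →ₗ[ZMod p] GaloisField p e) :
    Nat.card {a : GaloisField p e // ∀ u, a + L u ≠ 0}
      = Nat.card (GaloisField p e) - Nat.card (LinearMap.range L) := by
  classical
  haveI : Fintype (GaloisField p e) := Fintype.ofFinite _
  have hiff : ∀ a : GaloisField p e, (∀ u, a + L u ≠ 0) ↔ ¬ (a ∈ LinearMap.range L) := by
    intro a
    constructor
    · rintro h ⟨u, hu⟩
      exact h (-u) (by rw [map_neg, hu, add_neg_cancel])
    · intro h u hu
      exact h ⟨-u, by rw [map_neg]; exact neg_eq_of_add_eq_zero_left hu⟩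
  rw [Nat.card_congr (Equiv.subtypeEquivRight hiff), Nat.card_eq_fintype_card,
    Fintype.card_subtype_compl, Nat.card_eq_fintype_card, Nat.card_eq_fintype_card]

/-- For `m ≥ e`, the number of `w ∈ F_q^{m+1}` such that
`F_w(x) = w_1 + w_2 x + ⋯ + w_{m+1} x^{p^{m-1}}` has no root in `F_q` equals
`q^{m-e} ∑_{i=1}^{e} (p^e - p^{e-i}) ∏_{j<e-i}(p^e-p^j)^2 / ∏_{j<e-i}(p^{e-i}-p^j)`. -/
theorem stmt9 (p e m : ℕ) [Fact p.Prime] (he : 1 ≤ e) (hm : e ≤ m) :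
    (Nat.card {w : Fin (m + 1) → GaloisField p e //
        ∀ u : GaloisField p e, w 0 + ∑ k : Fin m, w k.succ * u ^ p ^ (k : ℕ) ≠ 0} : ℚ) =
      ((p : ℚ) ^ e) ^ (m - e) *
        ∑ i ∈ Finset.Icc 1 e, ((p : ℚ) ^ e - (p : ℚ) ^ (e - i)) *
          (∏ j ∈ Finset.range (e - i), ((p : ℚ) ^ e - p ^ j) ^ 2) /
          (∏ j ∈ Finset.range (e - i), ((p : ℚ) ^ (e - i) - p ^ j)) := by
  classical
  have he0 : e ≠ 0 := by omega
  have hp1 : 1 < p := (Fact.out : p.Prime).one_lt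
  have hpQ : (0 : ℚ) < (p : ℚ) := by exact_mod_cast Nat.pos_of_ne_zero (by omega)
  haveI : Fintype (GaloisField p e) := Fintype.ofFinite _
  haveI : Finite (GaloisField p e →ₗ[ZMod p] GaloisField p e) :=
    Finite.of_injective _ DFunLike.coe_injective
  haveI : Fintype (GaloisField p e →ₗ[ZMod p] GaloisField p e) := Fintype.ofFinite _
  have hcardK : Fintype.card (GaloisField p e) = p ^ e := by
    rw [← Nat.card_eq_fintype_card]; exact GaloisField.card p e he0
  have hfrK : finrank (ZMod p) (GaloisField p e) = e := GaloisField.finrank p he0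
  set gq : (GaloisField p e →ₗ[ZMod p] GaloisField p e) → ℚ :=
    fun L => (p : ℚ) ^ e - (p : ℚ) ^ (finrank (ZMod p) (LinearMap.range L)) with hgq
  -- Step B : split off the constant coefficient
  have hsplitN : Nat.card {w : Fin (m + 1) → GaloisField p e //
        ∀ u : GaloisField p e, w 0 + ∑ k : Fin m, w k.succ * u ^ p ^ (k : ℕ) ≠ 0}
      = ∑ t : Fin m → GaloisField p e,
          Nat.card {a : GaloisField p e // ∀ u, a + phi p e m t u ≠ 0} := by
    have e1 : {x : (Fin m → GaloisField p e) × GaloisField p e //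
          ∀ u, x.2 + phi p e m x.1 u ≠ 0}
        ≃ {w : Fin (m + 1) → GaloisField p e //
            ∀ u : GaloisField p e, w 0 + ∑ k : Fin m, w k.succ * u ^ p ^ (k : ℕ) ≠ 0} :=
      Equiv.subtypeEquiv ((Equiv.prodComm _ _).trans (Fin.consEquiv fun _ => GaloisField p e)) (by
        intro x
        simp only [Equiv.trans_apply, Equiv.prodComm_apply, Fin.consEquiv_apply, Prod.fst_swap,
          Prod.snd_swap]
        constructor
        · intro h u
          have := h u
          rw [phi_apply] at this
          simpa [Fin.cons_zero, Fin.cons_succ] using this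
        · intro h u
          have := h u
          rw [phi_apply]
          simpa [Fin.cons_zero, Fin.cons_succ] using this)
    have e2 : {x : (Fin m → GaloisField p e) × GaloisField p e //
          ∀ u, x.2 + phi p e m x.1 u ≠ 0}
        ≃ Σ t : Fin m → GaloisField p e, {a : GaloisField p e // ∀ u, a + phi p e m t u ≠ 0} :=
      Equiv.subtypeProdEquivSigmaSubtype (fun t a => ∀ u, a + phi p e m t u ≠ 0)
    rw [Nat.card_congr (e1.symm.trans e2), Nat.card_eq_fintype_card, Fintype.card_sigma]
    exact Finset.sum_congr rfl fun t _ => (Nat.card_eq_fintype_card).symm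
  -- Step C : the inner cardinality
  have hinner : ∀ L : GaloisField p e →ₗ[ZMod p] GaloisField p e,
      (Nat.card {a : GaloisField p e // ∀ u, a + L u ≠ 0} : ℚ) = gq L := by
    intro L
    have h1 : Nat.card (LinearMap.range L)
        = p ^ (finrank (ZMod p) (LinearMap.range L)) := by
      haveI : Fintype (LinearMap.range L) := Fintype.ofFinite _
      rw [Nat.card_eq_fintype_card, card_eq_pow_finrank (K := ZMod p), ZMod.card]
    have h2 : Nat.card (LinearMap.range L) ≤ Nat.card (GaloisField p e) :=
      Nat.card_le_card_of_injective _ Subtype.val_injective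
    rw [card_avoid, Nat.cast_sub h2, h1, GaloisField.card p e he0, hgq]
    push_cast
    ring
  -- Step D : fibers of phi all have the same cardinality
  set c0 : ℕ := ((Finset.univ : Finset (Fin m → GaloisField p e)).filter
      fun t => phi p e m t = 0).card with hc0
  have hfib : ∀ L : GaloisField p e →ₗ[ZMod p] GaloisField p e,
      ((Finset.univ : Finset (Fin m → GaloisField p e)).filter
        fun t => phi p e m t = L).card = c0 := by
    intro L
    obtain ⟨t0, ht0⟩ := phi_surjective p e he0 hm L
    refine Finset.card_bij' (fun t _ => t - t0) (fun t _ => t + t0) ?_ ?_ ?_ ?_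
    · intro t ht
      rw [Finset.mem_filter] at ht ⊢
      refine ⟨Finset.mem_univ _, ?_⟩
      rw [phi_sub, ht.2, ht0, sub_self]
    · intro t ht
      rw [Finset.mem_filter] at ht ⊢
      refine ⟨Finset.mem_univ _, ?_⟩
      rw [phi_add, ht.2, ht0, zero_add]
    · intro t _; simp
    · intro t _; simp
  have hEndCard : Fintype.card (GaloisField p e →ₗ[ZMod p] GaloisField p e) = p ^ (e * e) := by
    rw [← Nat.card_eq_fintype_card, card_End p e he0]
  have htotal : (p ^ e) ^ m = p ^ (e * e) * c0 := by
    have h1 : (Finset.univ : Finset (Fin m → GaloisField p e)).card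
        = ∑ L : GaloisField p e →ₗ[ZMod p] GaloisField p e,
            ((Finset.univ : Finset (Fin m → GaloisField p e)).filter
              fun t => phi p e m t = L).card :=
      Finset.card_eq_sum_card_fiberwise (fun t _ => Finset.mem_univ _)
    rw [Finset.card_univ, Fintype.card_fun, hcardK, Fintype.card_fin] at h1
    rw [h1, Finset.sum_congr rfl (fun L _ => hfib L), Finset.sum_const, Finset.card_univ,
      hEndCard, smul_eq_mul]
  have hc0Q : (c0 : ℚ) = ((p : ℚ) ^ e) ^ (m - e) := by
    have hcast : ((p : ℚ) ^ e) ^ m = (p : ℚ) ^ (e * e) * (c0 : ℚ) := by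
      exact_mod_cast congrArg (Nat.cast (R := ℚ)) htotal
    have hne : ((p : ℚ) ^ e) ^ e ≠ 0 := by positivity
    apply mul_right_cancel₀ hne
    rw [← pow_add, Nat.sub_add_cancel hm, hcast, pow_mul, mul_comm]
  -- Step D2 : sum over t becomes sum over L
  have hsum2 : ∑ t : Fin m → GaloisField p e, gq (phi p e m t)
      = (c0 : ℚ) * ∑ L : GaloisField p e →ₗ[ZMod p] GaloisField p e, gq L := by
    have hfw := Finset.sum_fiberwise_of_maps_to (s := (Finset.univ : Finset (Fin m → GaloisField p e)))
      (t := (Finset.univ : Finset (GaloisField p e →ₗ[ZMod p] GaloisField p e)))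
      (g := phi p e m)
      (fun t _ => Finset.mem_univ (phi p e m t)) (fun t => gq (phi p e m t))
    rw [← hfw, Finset.mul_sum]
    apply Finset.sum_congr rfl
    intro L _
    rw [Finset.sum_congr rfl (fun t ht => by
        rw [(Finset.mem_filter.mp ht).2]),
      Finset.sum_const, hfib L, nsmul_eq_mul]
  -- Step E : group by rank
  have hsum3 : (∑ L : GaloisField p e →ₗ[ZMod p] GaloisField p e, gq L)
      = ∑ j ∈ Finset.range (e + 1),
          (((Finset.univ : Finset (GaloisField p e →ₗ[ZMod p] GaloisField p e)).filter
            fun L => finrank (ZMod p) (LinearMap.range L) = j).card : ℚ)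
            * ((p : ℚ) ^ e - (p : ℚ) ^ j) := by
    have hfw := Finset.sum_fiberwise_of_maps_to (s := (Finset.univ : Finset (GaloisField p e →ₗ[ZMod p] GaloisField p e)))
      (t := Finset.range (e + 1))
      (g := fun L => finrank (ZMod p) (LinearMap.range L))
      (fun L _ => Finset.mem_range.mpr
        (Nat.lt_succ_of_le ((Submodule.finrank_le (LinearMap.range L)).trans hfrK.le))) gq
    rw [← hfw]
    apply Finset.sum_congr rfl
    intro j _
    have hval : ∀ L ∈ (Finset.univ : Finset (GaloisField p e →ₗ[ZMod p] GaloisField p e)).filter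
        (fun L => finrank (ZMod p) (LinearMap.range L) = j),
        gq L = (p : ℚ) ^ e - (p : ℚ) ^ j := by
      intro L hL
      show (p : ℚ) ^ e - (p : ℚ) ^ (finrank (ZMod p) (LinearMap.range L)) = _
      rw [(Finset.mem_filter.mp hL).2]
    rw [Finset.sum_congr rfl hval, Finset.sum_const, nsmul_eq_mul]
  -- Step F : number of maps of given rank
  have hN : ∀ j, j ≤ e →
      ((((Finset.univ : Finset (GaloisField p e →ₗ[ZMod p] GaloisField p e)).filter
          fun L => finrank (ZMod p) (LinearMap.range L) = j).card : ℚ)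
        * ∏ i ∈ Finset.range j, ((p : ℚ) ^ j - (p : ℚ) ^ i))
      = (∏ i ∈ Finset.range j, ((p : ℚ) ^ e - (p : ℚ) ^ i)) ^ 2 := by
    intro j hj
    have key := card_rank_mul (F := ZMod p) (V := GaloisField p e) j (by rwa [hfrK])
    rw [ZMod.card, hfrK] at key
    have h1 : Nat.card {L : GaloisField p e →ₗ[ZMod p] GaloisField p e //
          finrank (ZMod p) (LinearMap.range L) = j}
        = ((Finset.univ : Finset (GaloisField p e →ₗ[ZMod p] GaloisField p e)).filter
            fun L => finrank (ZMod p) (LinearMap.range L) = j).card := by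
      rw [Nat.card_eq_fintype_card, Fintype.card_subtype]
    have h2 : Nat.card ((Fin j → ZMod p) ≃ₗ[ZMod p] (Fin j → ZMod p))
        = ∏ i ∈ Finset.range j, (p ^ j - p ^ i) := by
      have eGL : ((Fin j → ZMod p) ≃ₗ[ZMod p] (Fin j → ZMod p)) ≃ GL (Fin j) (ZMod p) :=
        ((Matrix.GeneralLinearGroup.toLin.trans
          (LinearMap.GeneralLinearGroup.generalLinearEquiv (ZMod p) (Fin j → ZMod p))).toEquiv).symm
      rw [Nat.card_congr eGL, Matrix.card_GL_field, ← Fin.prod_univ_eq_prod_range]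
      simp [ZMod.card]
    rw [h1, h2] at key
    have hcast := congrArg (Nat.cast (R := ℚ)) key
    rw [Nat.cast_mul, Nat.cast_prod, Nat.cast_pow, Nat.cast_prod] at hcast
    have hcp1 : ∀ i ∈ Finset.range j, ((p ^ j - p ^ i : ℕ) : ℚ) = (p : ℚ) ^ j - (p : ℚ) ^ i := by
      intro i hi
      rw [Nat.cast_sub (Nat.pow_le_pow_right hp1.le (Finset.mem_range.mp hi).le)]
      push_cast; ring
    have hcp2 : ∀ i ∈ Finset.range j, ((p ^ e - p ^ i : ℕ) : ℚ) = (p : ℚ) ^ e - (p : ℚ) ^ i := by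
      intro i hi
      rw [Nat.cast_sub (Nat.pow_le_pow_right hp1.le ((Finset.mem_range.mp hi).le.trans hj))]
      push_cast; ring
    rw [Finset.prod_congr rfl hcp1, Finset.prod_congr rfl hcp2] at hcast
    exact hcast
  -- Assemble
  rw [hsplitN]
  push_cast
  rw [Finset.sum_congr rfl (fun t _ => hinner (phi p e m t)), hsum2, hsum3, hc0Q]
  congr 1
  rw [Finset.sum_range_succ, sub_self, mul_zero, add_zero]
  refine Finset.sum_nbij' (fun j => e - j) (fun i => e - i) ?_ ?_ ?_ ?_ ?_
  · intro j hj
    rw [Finset.mem_range] at hj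
    rw [Finset.mem_Icc]
    clear * - hj he
    beta_reduce
    omega
  · intro i hi
    rw [Finset.mem_Icc] at hi
    rw [Finset.mem_range]
    clear * - hi he
    beta_reduce
    omega
  · intro j hj
    rw [Finset.mem_range] at hj
    clear * - hj
    beta_reduce
    omega
  · intro i hi
    rw [Finset.mem_Icc] at hi
    clear * - hi
    beta_reduce
    omega
  · intro j hj
    rw [Finset.mem_range] at hj
    have hjj : e - (e - j) = j := by clear * - hj; omega
    rw [hjj]
    have hprodpos : (0 : ℚ) < ∏ i ∈ Finset.range j, ((p : ℚ) ^ j - (p : ℚ) ^ i) := by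
      apply Finset.prod_pos
      intro i hi
      have : (p : ℚ) ^ i < (p : ℚ) ^ j := by
        apply pow_lt_pow_right₀ (by exact_mod_cast hp1) (Finset.mem_range.mp hi)
      linarith
    have hNj := hN j hj.le
    rw [Finset.prod_pow, eq_div_iff (ne_of_gt hprodpos)]
    linear_combination ((p : ℚ) ^ e - (p : ℚ) ^ j) * hNj
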